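/- Let m ≥ 1 and let λ = [λ₁,λ₂] be a Young diagram of size m with at most two rows, and set ν₁ = 2λ₁ − m. Then the number of oscillating tableaux of length m and shape [ν₁] (the one-row diagram with ν₁ boxes) all of whose intermediate shapes lie in Γ(∞) equals the binomial coefficient C(|𝒯(λ)| + 1, 2), where |𝒯(λ)| is the number of standard Young tableaux of shape λ. -/

import Mathlib

/-- `AddBox μ ν` means `ν` is obtained from `μ` by adding a single box (`μ → ν`). -/
def AddBox (μ ν : YoungDiagram) : Prop := μ ≤ ν ∧ ν.card = μ.card + 1

/-- `AdjBox μ ν` means `μ ↔ ν`, i.e. the diagrams differ by a single box. -/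
def AdjBox (μ ν : YoungDiagram) : Prop := AddBox μ ν ∨ AddBox ν μ

/-- `RowsEq μ L` means the row lengths of `μ` are given by the list `L`
(rows beyond the length of `L` being empty). -/
def RowsEq (μ : YoungDiagram) (L : List ℕ) : Prop := ∀ i, μ.rowLen i = L.getD i 0

/-- `Λ(j,ℓ)`: Young diagrams of size `j` with at most two rows whose
row difference is at most `ℓ - 2`. -/
def LambdaSet (j ℓ : ℕ) : Set YoungDiagram :=
  {μ | μ.card = j ∧ μ.rowLen 2 = 0 ∧ μ.rowLen 0 - μ.rowLen 1 ≤ ℓ - 2}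

/-- `Γ(ℓ)` for a finite `ℓ ≥ 6`. -/
def GammaSet (ℓ : ℕ) : Set YoungDiagram :=
  {μ | μ.colLen 0 + μ.colLen 1 ≤ 4 ∧ μ.rowLen 0 + μ.rowLen 1 ≤ ℓ - 2}
    ∪ {μ | RowsEq μ [ℓ - 2, 1, 1]}

/-- `Γ(∞)`: diagrams whose first two column lengths sum to at most `4`. -/
def GammaInf : Set YoungDiagram := {μ | μ.colLen 0 + μ.colLen 1 ≤ 4}

/-- A Young-tableau path of length `m`, with the `j`-th shape restricted to lie in `P j`. -/
def IsTabPath (P : ℕ → Set YoungDiagram) (m : ℕ) (f : Fin (m + 1) → YoungDiagram) : Prop :=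
  f 0 = ⊥ ∧ (∀ j : Fin m, AddBox (f j.castSucc) (f j.succ)) ∧
    ∀ j : Fin (m + 1), f j ∈ P (j : ℕ)

/-- An oscillating-tableau path of length `m` with all shapes in `Γ`. -/
def IsOscPath (Γ : Set YoungDiagram) (m : ℕ) (f : Fin (m + 1) → YoungDiagram) : Prop :=
  f 0 = ⊥ ∧ (∀ j : Fin m, AdjBox (f j.castSucc) (f j.succ)) ∧
    ∀ j : Fin (m + 1), f j ∈ Γ

/-- The number of Young tableaux (paths) of length `m`, with shapes restricted by `P`,
whose final shape has row lengths `L`. -/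
noncomputable def tabCount (P : ℕ → Set YoungDiagram) (m : ℕ) (L : List ℕ) : ℕ :=
  Nat.card {f : Fin (m + 1) → YoungDiagram //
    IsTabPath P m f ∧ RowsEq (f (Fin.last m)) L}

/-- The number of oscillating tableaux of length `m` with shapes in `Γ`
whose final shape has row lengths `L`. -/
noncomputable def oscCount (Γ : Set YoungDiagram) (m : ℕ) (L : List ℕ) : ℕ :=
  Nat.card {f : Fin (m + 1) → YoungDiagram //
    IsOscPath Γ m f ∧ RowsEq (f (Fin.last m)) L}

/-- The number of oscillating tableaux of length `m` with shapes in `Γ` and final shape `ν`. -/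
noncomputable def oscCountD (Γ : Set YoungDiagram) (m : ℕ) (ν : YoungDiagram) : ℕ :=
  Nat.card {f : Fin (m + 1) → YoungDiagram //
    IsOscPath Γ m f ∧ f (Fin.last m) = ν}

open YoungDiagram

abbrev St := ℕ × ℕ × ℕ × ℕ

def wt (s : St) : ℕ := s.1 + s.2.1 + s.2.2.1 + s.2.2.2

def valid (s : St) : Prop :=
  s.2.1 ≤ s.1 ∧ s.2.2.1 ≤ s.2.1 ∧ s.2.2.2 ≤ s.2.2.1 ∧
    (1 ≤ s.2.2.1 → s.2.1 ≤ 1) ∧ (1 ≤ s.2.2.2 → s.1 ≤ 1)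

def q4 (μ : YoungDiagram) : St := (μ.rowLen 0, μ.rowLen 1, μ.rowLen 2, μ.rowLen 3)

theorem rowLen_eq_zero_iff {μ : YoungDiagram} {i : ℕ} : μ.rowLen i = 0 ↔ (i, 0) ∉ μ := by
  rw [mem_iff_lt_rowLen]; omega

theorem yd_ext_rowLen {μ ν : YoungDiagram} (h : ∀ i, μ.rowLen i = ν.rowLen i) : μ = ν := by
  ext ⟨i, j⟩
  simp only [mem_cells, mem_iff_lt_rowLen, h]

theorem yd_le_iff_rowLen {μ ν : YoungDiagram} : μ ≤ ν ↔ ∀ i, μ.rowLen i ≤ ν.rowLen i := by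
  constructor
  · intro h i
    rcases Nat.eq_zero_or_pos (μ.rowLen i) with h0 | h0
    · omega
    · have : (i, μ.rowLen i - 1) ∈ μ := by rw [mem_iff_lt_rowLen]; omega
      have h2 := h this
      rw [mem_iff_lt_rowLen] at h2; omega
  · intro h ⟨i, j⟩ hm
    rw [mem_iff_lt_rowLen] at *
    exact lt_of_lt_of_le hm (h i)

theorem rowLen_eq_zero_of_gamma {μ : YoungDiagram} (h : μ ∈ GammaInf) {i : ℕ} (hi : 4 ≤ i) :
    μ.rowLen i = 0 := by
  rw [rowLen_eq_zero_iff]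
  intro hm
  rw [mem_iff_lt_colLen] at hm
  have : μ.colLen 1 ≤ μ.colLen 0 := μ.colLen_anti 0 1 (by omega)
  have := h
  simp only [GammaInf, Set.mem_setOf_eq] at this
  omega

theorem card_eq_sum_rowLens4 {μ : YoungDiagram} (h4 : μ.rowLen 4 = 0) :
    μ.card = μ.rowLen 0 + μ.rowLen 1 + μ.rowLen 2 + μ.rowLen 3 := by
  have hcells : μ.cells = (Finset.range 4).biUnion μ.row := by
    ext ⟨i, j⟩
    simp only [Finset.mem_biUnion, Finset.mem_range, mem_row_iff, mem_cells]
    constructor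
    · intro hm
      refine ⟨i, ?_, hm, rfl⟩
      by_contra hi
      push_neg at hi
      have : μ.rowLen i ≤ μ.rowLen 4 := μ.rowLen_anti 4 i (by omega)
      rw [mem_iff_lt_rowLen] at hm
      omega
    · rintro ⟨a, _, hm, rfl⟩; exact hm
  have hdisj : ∀ x ∈ Finset.range 4, ∀ y ∈ Finset.range 4, x ≠ y →
      Disjoint (μ.row x) (μ.row y) := by
    intro x _ y _ hxy
    rw [Finset.disjoint_left]
    intro c hc hc'
    rw [mem_row_iff] at hc hc'
    exact hxy (hc.2 ▸ hc'.2.symm ▸ rfl)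
  have : μ.card = ∑ i ∈ Finset.range 4, (μ.row i).card := by
    rw [YoungDiagram.card, hcells, Finset.card_biUnion hdisj]
  rw [this]
  have : ∀ i, (μ.row i).card = μ.rowLen i := fun i => (μ.rowLen_eq_card).symm
  simp [this, Finset.sum_range_succ]

theorem colLen_le_of {μ : YoungDiagram} {k j : ℕ} (h : (k, j) ∉ μ) : μ.colLen j ≤ k := by
  by_contra hc
  exact h (mem_iff_lt_colLen.2 (by omega))

theorem lt_colLen_of {μ : YoungDiagram} {k j : ℕ} (h : (k, j) ∈ μ) : k < μ.colLen j :=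
  mem_iff_lt_colLen.1 h

def Dg (s : St) (h : valid s) : YoungDiagram :=
  ofRowLens [s.1, s.2.1, s.2.2.1, s.2.2.2] (by
    have h1 := h.1
    have h2 := h.2.1
    have h3 := h.2.2.1
    simp [List.sortedGE_iff_pairwise, List.pairwise_cons]
    omega)

theorem not_mem_Dg {s : St} {h : valid s} {k j : ℕ}
    (hk : [s.1, s.2.1, s.2.2.1, s.2.2.2].getD k 0 ≤ j) : (k, j) ∉ Dg s h := by
  rw [Dg, mem_ofRowLens]
  rintro ⟨hlen, hlt⟩
  simp only [List.length_cons, List.length_nil] at hlen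
  obtain ⟨a, b, c, d⟩ := s
  interval_cases k <;> simp_all <;> omega

theorem mem_Dg {s : St} {h : valid s} {k j : ℕ}
    (hk : k < 4) (hj : j < [s.1, s.2.1, s.2.2.1, s.2.2.2].getD k 0) : (k, j) ∈ Dg s h := by
  rw [Dg, mem_ofRowLens]
  obtain ⟨a, b, c, d⟩ := s
  interval_cases k <;> simp_all <;> omega

theorem rowLen_Dg (s : St) (h : valid s) (i : ℕ) :
    (Dg s h).rowLen i = [s.1, s.2.1, s.2.2.1, s.2.2.2].getD i 0 := by
  rcases Nat.lt_or_ge i 4 with hi | hi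
  · rcases Nat.eq_zero_or_pos ([s.1, s.2.1, s.2.2.1, s.2.2.2].getD i 0) with h0 | h0
    · rw [rowLen_eq_zero_iff.2 (not_mem_Dg (by omega)), h0]
    · have hmem : (i, [s.1, s.2.1, s.2.2.1, s.2.2.2].getD i 0 - 1) ∈ Dg s h :=
        mem_Dg hi (by omega)
      have hnot : (i, [s.1, s.2.1, s.2.2.1, s.2.2.2].getD i 0) ∉ Dg s h :=
        not_mem_Dg (le_refl _)
      rw [mem_iff_lt_rowLen] at hmem
      rw [mem_iff_lt_rowLen] at hnot
      omega
  · rw [List.getD_eq_default _ _ (by simp; omega)]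
    exact rowLen_eq_zero_iff.2 (not_mem_Dg (by
      rw [List.getD_eq_default _ _ (by simp; omega)]))

theorem q4_Dg (s : St) (h : valid s) : q4 (Dg s h) = s := by
  obtain ⟨a, b, c, d⟩ := s
  simp [q4, rowLen_Dg]

theorem Dg_mem_gamma (s : St) (h : valid s) : Dg s h ∈ GammaInf := by
  have h1 := h.1
  have h2 := h.2.1
  have h3 := h.2.2.1
  have h4 := h.2.2.2.1
  have h5 := h.2.2.2.2
  simp only [GammaInf, Set.mem_setOf_eq]
  by_cases hd : 1 ≤ s.2.2.2
  · have c0 : (Dg s h).colLen 0 ≤ 4 := colLen_le_of (not_mem_Dg (by simp))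
    have c1 : (Dg s h).colLen 1 ≤ 0 := colLen_le_of (not_mem_Dg (by simp; omega))
    omega
  · by_cases hc : 1 ≤ s.2.2.1
    · have c0 : (Dg s h).colLen 0 ≤ 3 := colLen_le_of (not_mem_Dg (by simp; omega))
      have c1 : (Dg s h).colLen 1 ≤ 1 := colLen_le_of (not_mem_Dg (by simp; omega))
      omega
    · have c0 : (Dg s h).colLen 0 ≤ 2 := colLen_le_of (not_mem_Dg (by simp; omega))
      have c1 : (Dg s h).colLen 1 ≤ 2 := colLen_le_of (not_mem_Dg (by simp; omega))
      omega

theorem valid_q4_of_gamma {μ : YoungDiagram} (h : μ ∈ GammaInf) : valid (q4 μ) := by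
  simp only [GammaInf, Set.mem_setOf_eq] at h
  refine ⟨μ.rowLen_anti 0 1 (by omega), μ.rowLen_anti 1 2 (by omega),
    μ.rowLen_anti 2 3 (by omega), ?_, ?_⟩
  · intro hc
    by_contra hb
    push_neg at hb
    have m1 : (2, 0) ∈ μ := mem_iff_lt_rowLen.2 (by simp [q4] at hc ⊢; omega)
    have m2 : (1, 1) ∈ μ := mem_iff_lt_rowLen.2 (by simp [q4] at hb ⊢; omega)
    have := lt_colLen_of m1
    have := lt_colLen_of m2
    omega
  · intro hd
    by_contra ha
    push_neg at ha
    have m1 : (3, 0) ∈ μ := mem_iff_lt_rowLen.2 (by simp [q4] at hd ⊢; omega)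
    have m2 : (0, 1) ∈ μ := mem_iff_lt_rowLen.2 (by simp [q4] at ha ⊢; omega)
    have := lt_colLen_of m1
    have := lt_colLen_of m2
    omega

def addS (s t : St) : Prop :=
  valid s ∧ valid t ∧ s.1 ≤ t.1 ∧ s.2.1 ≤ t.2.1 ∧ s.2.2.1 ≤ t.2.2.1 ∧ s.2.2.2 ≤ t.2.2.2 ∧
    wt t = wt s + 1

def adjS (s t : St) : Prop := addS s t ∨ addS t s

theorem adjS_wt {s t : St} (h : adjS s t) : wt t ≤ wt s + 1 := by
  rcases h with h | h
  · exact le_of_eq h.2.2.2.2.2.2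
  · have := h.2.2.2.2.2.2; omega

def PSp (R : St → St → Prop) (j : ℕ) (s : St) :=
  {g : Fin (j + 1) → St // g 0 = (0, 0, 0, 0) ∧
    (∀ k : Fin j, R (g k.castSucc) (g k.succ)) ∧ g (Fin.last j) = s}

theorem psp_wt_le {R : St → St → Prop} (hR : ∀ s t, R s t → wt t ≤ wt s + 1)
    {j : ℕ} {s : St} (g : PSp R j s) (k : Fin (j + 1)) : wt (g.1 k) ≤ (k : ℕ) := by
  have key : ∀ (n : ℕ) (hn : n < j + 1), wt (g.1 ⟨n, hn⟩) ≤ n := by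
    intro n
    induction n with
    | zero =>
      intro hn
      have h0 : (⟨0, hn⟩ : Fin (j + 1)) = 0 := rfl
      rw [h0, g.2.1]
      simp [wt]
    | succ n ih =>
      intro hn
      have hstep := g.2.2.1 ⟨n, by omega⟩
      have h1 : (⟨n, by omega⟩ : Fin j).castSucc = ⟨n, by omega⟩ := rfl
      have h2 : (⟨n, by omega⟩ : Fin j).succ = ⟨n + 1, hn⟩ := rfl
      rw [h1, h2] at hstep
      have := hR _ _ hstep
      have := ih (by omega)
      omega
  have : k = ⟨(k : ℕ), k.isLt⟩ := rfl
  rw [this]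
  exact key _ _

theorem psp_finite {R : St → St → Prop} (hR : ∀ s t, R s t → wt t ≤ wt s + 1)
    (j : ℕ) (s : St) : Finite (PSp R j s) := by
  have hb : ∀ (g : PSp R j s) (k : Fin (j + 1)),
      (g.1 k).1 < j + 1 ∧ (g.1 k).2.1 < j + 1 ∧ (g.1 k).2.2.1 < j + 1 ∧ (g.1 k).2.2.2 < j + 1 := by
    intro g k
    have := psp_wt_le hR g k
    have hk : (k : ℕ) ≤ j := by omega
    simp only [wt] at this
    refine ⟨by omega, by omega, by omega, by omega⟩
  apply Finite.of_injective
    (β := Fin (j + 1) → Fin (j + 1) × Fin (j + 1) × Fin (j + 1) × Fin (j + 1))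
    (fun g k => (⟨(g.1 k).1, (hb g k).1⟩, ⟨(g.1 k).2.1, (hb g k).2.1⟩,
      ⟨(g.1 k).2.2.1, (hb g k).2.2.1⟩, ⟨(g.1 k).2.2.2, (hb g k).2.2.2⟩))
  intro g h heq
  apply Subtype.ext
  funext k
  have := congrFun heq k
  simp only [Prod.mk.injEq, Fin.mk.injEq] at this
  obtain ⟨e1, e2, e3, e4⟩ := this
  ext
  · exact e1
  · exact e2
  · exact e3
  · exact e4

theorem psp_heq {R : St → St → Prop} {j : ℕ} {s t : St} (h : s = t) {g₁ : PSp R j s}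
    {g₂ : PSp R j t} (hg : g₁.1 = g₂.1) : HEq g₁ g₂ := by
  subst h; exact heq_of_eq (Subtype.ext hg)

def pspEquiv (R : St → St → Prop) (j : ℕ) (s : St) (F : Finset St)
    (hF : ∀ t, R t s ↔ t ∈ F) :
    PSp R (j + 1) s ≃ Σ t : F, PSp R j t where
  toFun g := ⟨⟨g.1 (Fin.last j).castSucc, by
      rw [← hF]
      have := g.2.2.1 (Fin.last j)
      rwa [Fin.succ_last, g.2.2.2] at this⟩,
    ⟨fun k => g.1 k.castSucc, g.2.1, by
      intro k
      have := g.2.2.1 k.castSucc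
      rwa [Fin.succ_castSucc] at this, rfl⟩⟩
  invFun p := ⟨Fin.snoc p.2.1 s, by
      rw [show ((0 : Fin (j + 2))) = (0 : Fin (j + 1)).castSucc from rfl, Fin.snoc_castSucc]
      exact p.2.2.1, by
      intro k
      induction k using Fin.lastCases with
      | last =>
        rw [Fin.succ_last, Fin.snoc_last, Fin.snoc_castSucc, p.2.2.2.2]
        exact (hF _).2 p.1.2
      | cast k =>
        rw [Fin.succ_castSucc, Fin.snoc_castSucc, Fin.snoc_castSucc]
        exact p.2.2.2.1 k, by
      rw [Fin.snoc_last]⟩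
  left_inv g := by
    apply Subtype.ext
    show Fin.snoc (fun k : Fin (j + 1) => g.1 k.castSucc) s = g.1
    funext i
    induction i using Fin.lastCases with
    | last => rw [Fin.snoc_last]; exact g.2.2.2.symm
    | cast k => rw [Fin.snoc_castSucc]
  right_inv p := by
    obtain ⟨⟨t, ht⟩, g, hg0, hgs, hgl⟩ := p
    dsimp only
    have hval : (Fin.snoc g s : Fin (j + 2) → St) ((Fin.last j).castSucc) = t := by
      rw [Fin.snoc_castSucc]; exact hgl
    have hfun : (fun k : Fin (j + 1) => (Fin.snoc g s : Fin (j + 2) → St) k.castSucc) = g := by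
      funext k; rw [Fin.snoc_castSucc]
    apply Sigma.ext
    · exact Subtype.ext hval
    · exact psp_heq hval hfun

noncomputable def NC (R : St → St → Prop) (j : ℕ) (s : St) : ℕ := Nat.card (PSp R j s)

theorem NC_zero (R : St → St → Prop) (s : St) :
    NC R 0 s = if s = (0, 0, 0, 0) then 1 else 0 := by
  rcases eq_or_ne s (0, 0, 0, 0) with h | h
  · subst h
    rw [if_pos rfl, NC]
    rw [Nat.card_eq_one_iff_unique]
    constructor
    · constructor
      intro g h
      apply Subtype.ext
      funext i
      have hi : i = 0 := by omega
      rw [hi, g.2.1, h.2.1]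
    · exact ⟨⟨fun _ => (0, 0, 0, 0), rfl, fun k => k.elim0, rfl⟩⟩
  · rw [if_neg h, NC]
    have : IsEmpty (PSp R 0 s) := by
      constructor
      rintro ⟨g, hg0, _, hgl⟩
      apply h
      have h0 : g (Fin.last 0) = g 0 := rfl
      rw [← hgl, h0, hg0]
    exact Nat.card_of_isEmpty

theorem NC_succ (R : St → St → Prop) (hR : ∀ s t, R s t → wt t ≤ wt s + 1)
    (j : ℕ) (s : St) (F : Finset St) (hF : ∀ t, R t s ↔ t ∈ F) :
    NC R (j + 1) s = ∑ t ∈ F, NC R j t := by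
  haveI : ∀ t : St, Finite (PSp R j t) := fun t => psp_finite hR j t
  haveI : ∀ t : F, Fintype (PSp R j (t : St)) := fun t => Fintype.ofFinite _
  rw [NC, Nat.card_congr (pspEquiv R j s F hF), Nat.card_eq_fintype_card,
    Fintype.card_sigma]
  rw [← Finset.sum_attach F (fun t => NC R j t)]
  apply Finset.sum_congr rfl
  intro t _
  rw [NC, Nat.card_eq_fintype_card]

def Bw : ℕ → ℕ → ℕ
  | 0, a => if a = 0 then 1 else 0
  | j + 1, 0 => Bw j 1
  | j + 1, a + 1 => Bw j a + Bw j (a + 2)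

theorem Bw_eq_zero : ∀ j a, j < a → Bw j a = 0 := by
  intro j
  induction j with
  | zero => intro a ha; simp [Bw]; omega
  | succ n ih =>
    intro a ha
    match a, ha with
    | a + 1, ha =>
      rw [Bw, ih a (by omega), ih (a + 2) (by omega)]

theorem two_choose_two (n : ℕ) : 2 * n.choose 2 = n * (n - 1) := by
  induction n with
  | zero => rfl
  | succ n ih =>
    rw [Nat.choose_succ_succ, Nat.choose_one_right, Nat.mul_add, ih]
    cases n with
    | zero => rfl
    | succ m => simp only [Nat.add_sub_cancel]; ring

theorem id1 (x y : ℕ) :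
    Nat.choose (x + 1) 2 + Nat.choose (y + 1) 2 + x * y = Nat.choose (x + y + 1) 2 := by
  apply Nat.eq_of_mul_eq_mul_left (show 0 < 2 by norm_num)
  have e1 := two_choose_two (x + 1)
  have e2 := two_choose_two (y + 1)
  have e3 := two_choose_two (x + y + 1)
  simp only [Nat.add_sub_cancel] at e1 e2 e3
  rw [Nat.mul_add, Nat.mul_add, e1, e2, e3]
  ring

theorem id2 (x y : ℕ) :
    Nat.choose x 2 + Nat.choose y 2 + x * y = Nat.choose (x + y) 2 := by
  match x, y with
  | 0, y => simp
  | x + 1, 0 => simp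
  | x + 1, y + 1 =>
    apply Nat.eq_of_mul_eq_mul_left (show 0 < 2 by norm_num)
    have e1 := two_choose_two (x + 1)
    have e2 := two_choose_two (y + 1)
    have e3 := two_choose_two (x + 1 + (y + 1))
    simp only [Nat.add_sub_cancel] at e1 e2 e3
    rw [Nat.mul_add, Nat.mul_add, e1, e2]
    rw [show x + 1 + (y + 1) - 1 = x + y + 1 by omega] at e3
    rw [e3]
    ring

theorem id3 (u : ℕ) : Nat.choose (u + 1) 2 + Nat.choose u 2 = u * u := by
  match u with
  | 0 => rfl
  | v + 1 =>
    apply Nat.eq_of_mul_eq_mul_left (show 0 < 2 by norm_num)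
    have e1 := two_choose_two (v + 2)
    have e2 := two_choose_two (v + 1)
    simp only [Nat.add_sub_cancel] at e1 e2
    rw [show v + 2 - 1 = v + 1 by omega] at e1
    rw [Nat.mul_add, show v + 1 + 1 = v + 2 by rfl, e1, e2]
    ring

set_option maxHeartbeats 2000000 in
theorem osc_closed : ∀ j,
    (∀ a, NC adjS j (a, 0, 0, 0) = (Bw j a + 1).choose 2) ∧
    (∀ p q, 1 ≤ q → q ≤ p → NC adjS j (p, q, 0, 0) = Bw j (p + q) * Bw j (p - q)) ∧
    (∀ a, 1 ≤ a → NC adjS j (a, 1, 1, 0) = (Bw j a).choose 2) ∧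
    (NC adjS j (1, 1, 1, 1) = (Bw j 0).choose 2) := by
  intro j
  induction j with
  | zero =>
    refine ⟨?_, ?_, ?_, ?_⟩
    · intro a
      match a with
      | 0 => rw [NC_zero]; rfl
      | a + 1 => rw [NC_zero, if_neg (by simp)]; rfl
    · intro p q hq hp
      match p, q, hq, hp with
      | 0, q, _, hp => omega
      | p + 1, 0, hq, _ => omega
      | p + 1, q + 1, _, _ =>
        rw [NC_zero, if_neg (by simp), show Bw 0 (p + 1 + (q + 1)) = 0 by simp [Bw],
          Nat.zero_mul]
    · intro a ha
      match a, ha with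
      | a + 1, _ => rw [NC_zero, if_neg (by simp)]; rfl
    · rw [NC_zero, if_neg (by simp)]; rfl
  | succ j ih =>
    obtain ⟨ihP, ihQ, ihH, ihF⟩ := ih
    have hwt : ∀ s t : St, adjS s t → wt t ≤ wt s + 1 := fun s t h => adjS_wt h
    refine ⟨?_, ?_, ?_, ?_⟩
    · -- rows
      intro a
      match a with
      | 0 =>
        rw [NC_succ adjS hwt j _ {(1, 0, 0, 0)} (by
          rintro ⟨a, b, c, d⟩
          simp [adjS, addS, valid, wt, Prod.ext_iff]
          omega)]
        rw [Finset.sum_singleton, ihP 1]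
        rfl
      | a + 1 =>
        rw [NC_succ adjS hwt j _ {(a, 0, 0, 0), (a + 2, 0, 0, 0), (a + 1, 1, 0, 0)} (by
          rintro ⟨x, y, z, w⟩
          simp [adjS, addS, valid, wt, Prod.ext_iff]
          omega)]
        rw [Finset.sum_insert (by simp [Prod.ext_iff]),
          Finset.sum_insert (by simp [Prod.ext_iff]), Finset.sum_singleton]
        rw [ihP a, ihP (a + 2), ihQ (a + 1) 1 le_rfl (by omega)]
        rw [show a + 1 + 1 = a + 2 from rfl, show a + 1 - 1 = a by omega]
        rw [show Bw (j + 1) (a + 1) = Bw j a + Bw j (a + 2) from rfl]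
        rw [← id1 (Bw j a) (Bw j (a + 2))]
        ring
    · -- two-row shapes
      intro p q hq hp
      match p, q, hq, hp with
      | 0, q, _, hp => omega
      | p + 1, 0, hq, _ => omega
      | 1, 1, _, _ =>
        rw [NC_succ adjS hwt j _ {(2, 1, 0, 0), (1, 0, 0, 0), (1, 1, 1, 0)} (by
          rintro ⟨x, y, z, w⟩
          simp [adjS, addS, valid, wt, Prod.ext_iff]
          omega)]
        rw [Finset.sum_insert (by simp [Prod.ext_iff]),
          Finset.sum_insert (by simp [Prod.ext_iff]), Finset.sum_singleton]
        rw [ihQ 2 1 le_rfl (by omega), ihP 1, ihH 1 le_rfl]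
        simp only [show (2 : ℕ) + 1 = 3 from rfl, show (2 : ℕ) - 1 = 1 from rfl]
        rw [show Bw (j + 1) (1 + 1) = Bw j 1 + Bw j 3 from rfl,
          show Bw (j + 1) (1 - 1) = Bw j 1 from rfl]
        rw [id3 (Bw j 1)]
        ring
      | p + 2, 1, _, _ =>
        rw [NC_succ adjS hwt j _ {(p + 1, 1, 0, 0), (p + 3, 1, 0, 0), (p + 2, 2, 0, 0),
          (p + 2, 0, 0, 0), (p + 2, 1, 1, 0)} (by
          rintro ⟨x, y, z, w⟩
          simp [adjS, addS, valid, wt, Prod.ext_iff]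
          omega)]
        rw [Finset.sum_insert (by simp [Prod.ext_iff]),
          Finset.sum_insert (by simp [Prod.ext_iff]),
          Finset.sum_insert (by simp [Prod.ext_iff] <;> omega),
          Finset.sum_insert (by simp [Prod.ext_iff]), Finset.sum_singleton]
        rw [ihQ (p + 1) 1 le_rfl (by omega), ihQ (p + 3) 1 le_rfl (by omega),
          ihQ (p + 2) 2 (by omega) (by omega), ihP (p + 2), ihH (p + 2) (by omega)]
        simp only [show p + 1 + 1 = p + 2 from rfl, show p + 1 - 1 = p by omega,
          show p + 3 + 1 = p + 4 from rfl, show p + 3 - 1 = p + 2 by omega,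
          show p + 2 + 2 = p + 4 from rfl, show p + 2 - 2 = p by omega]
        rw [id3 (Bw j (p + 2))]
        rw [show Bw (j + 1) (p + 2 + 1) = Bw j (p + 2) + Bw j (p + 4) from rfl,
          show Bw (j + 1) (p + 2 - 1) = Bw j p + Bw j (p + 2) by
            rw [show p + 2 - 1 = p + 1 by omega]; rfl]
        ring
      | p + 1, q + 2, _, hp =>
        rcases eq_or_lt_of_le hp with heq | hlt
        · -- p + 1 = q + 2
          have hpq : p = q + 1 := by omega
          subst hpq
          rw [NC_succ adjS hwt j _ {(q + 3, q + 2, 0, 0), (q + 2, q + 1, 0, 0)} (by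
            rintro ⟨x, y, z, w⟩
            simp [adjS, addS, valid, wt, Prod.ext_iff]
            omega)]
          rw [Finset.sum_insert (by simp [Prod.ext_iff]), Finset.sum_singleton]
          rw [ihQ (q + 3) (q + 2) (by omega) (by omega),
            ihQ (q + 2) (q + 1) (by omega) (by omega)]
          simp only [show q + 3 + (q + 2) = 2 * q + 5 by omega,
            show q + 3 - (q + 2) = 1 by omega,
            show q + 2 + (q + 1) = 2 * q + 3 by omega,
            show q + 2 - (q + 1) = 1 by omega,
            show q + 1 + 1 + (q + 2) = 2 * q + 4 by omega,
            show q + 1 + 1 - (q + 2) = 0 by omega]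
          rw [show Bw (j + 1) (2 * q + 4) = Bw j (2 * q + 3) + Bw j (2 * q + 5) by
              rw [show 2 * q + 4 = (2 * q + 3) + 1 by omega]; rfl,
            show Bw (j + 1) 0 = Bw j 1 from rfl]
          ring
        · -- q + 2 < p + 1
          obtain ⟨u, rfl⟩ : ∃ u, p = q + u + 2 := ⟨p - q - 2, by omega⟩
          rw [NC_succ adjS hwt j _ {(q + u + 4, q + 2, 0, 0), (q + u + 2, q + 2, 0, 0),
            (q + u + 3, q + 3, 0, 0), (q + u + 3, q + 1, 0, 0)} (by
            rintro ⟨x, y, z, w⟩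
            simp [adjS, addS, valid, wt, Prod.ext_iff]
            omega)]
          rw [Finset.sum_insert (by simp [Prod.ext_iff] <;> omega),
            Finset.sum_insert (by simp [Prod.ext_iff] <;> omega),
            Finset.sum_insert (by simp [Prod.ext_iff] <;> omega), Finset.sum_singleton]
          rw [ihQ (q + u + 4) (q + 2) (by omega) (by omega),
            ihQ (q + u + 2) (q + 2) (by omega) (by omega),
            ihQ (q + u + 3) (q + 3) (by omega) (by omega),
            ihQ (q + u + 3) (q + 1) (by omega) (by omega)]
          simp only [show q + u + 4 + (q + 2) = 2 * q + u + 6 by omega,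
            show q + u + 4 - (q + 2) = u + 2 by omega,
            show q + u + 2 + (q + 2) = 2 * q + u + 4 by omega,
            show q + u + 2 - (q + 2) = u by omega,
            show q + u + 3 + (q + 3) = 2 * q + u + 6 by omega,
            show q + u + 3 - (q + 3) = u by omega,
            show q + u + 3 + (q + 1) = 2 * q + u + 4 by omega,
            show q + u + 3 - (q + 1) = u + 2 by omega,
            show q + u + 2 + 1 + (q + 2) = 2 * q + u + 5 by omega,
            show q + u + 2 + 1 - (q + 2) = u + 1 by omega]
          rw [show Bw (j + 1) (2 * q + u + 5) = Bw j (2 * q + u + 4) + Bw j (2 * q + u + 6) by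
              rw [show 2 * q + u + 5 = (2 * q + u + 4) + 1 by omega]; rfl,
            show Bw (j + 1) (u + 1) = Bw j u + Bw j (u + 2) from rfl]
          ring
    · -- hooks [a,1,1]
      intro a ha
      match a, ha with
      | 1, _ =>
        rw [NC_succ adjS hwt j _ {(2, 1, 1, 0), (1, 1, 1, 1), (1, 1, 0, 0)} (by
          rintro ⟨x, y, z, w⟩
          simp [adjS, addS, valid, wt, Prod.ext_iff]
          omega)]
        rw [Finset.sum_insert (by simp [Prod.ext_iff]),
          Finset.sum_insert (by simp [Prod.ext_iff]), Finset.sum_singleton]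
        rw [ihH 2 (by omega), ihF, ihQ 1 1 le_rfl le_rfl]
        rw [show Bw (j + 1) 1 = Bw j 0 + Bw j 2 from rfl, ← id2 (Bw j 0) (Bw j 2)]
        simp only [show (1 : ℕ) + 1 = 2 from rfl, show (1 : ℕ) - 1 = 0 from rfl]
        ring
      | a + 2, _ =>
        rw [NC_succ adjS hwt j _ {(a + 3, 1, 1, 0), (a + 1, 1, 1, 0), (a + 2, 1, 0, 0)} (by
          rintro ⟨x, y, z, w⟩
          simp [adjS, addS, valid, wt, Prod.ext_iff]
          omega)]
        rw [Finset.sum_insert (by simp [Prod.ext_iff]),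
          Finset.sum_insert (by simp [Prod.ext_iff]), Finset.sum_singleton]
        rw [ihH (a + 3) (by omega), ihH (a + 1) (by omega), ihQ (a + 2) 1 le_rfl (by omega)]
        rw [show Bw (j + 1) (a + 2) = Bw j (a + 1) + Bw j (a + 3) from rfl,
          ← id2 (Bw j (a + 1)) (Bw j (a + 3))]
        simp only [show a + 2 + 1 = a + 3 from rfl, show a + 2 - 1 = a + 1 by omega]
        ring
    · -- four-row column
      rw [NC_succ adjS hwt j _ {(1, 1, 1, 0)} (by
        rintro ⟨x, y, z, w⟩
        simp [adjS, addS, valid, wt, Prod.ext_iff]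
        omega)]
      rw [Finset.sum_singleton, ihH 1 le_rfl]
      rfl

theorem addS_wt {s t : St} (h : addS s t) : wt t ≤ wt s + 1 := le_of_eq h.2.2.2.2.2.2

set_option maxHeartbeats 1000000 in
theorem tab_closed : ∀ j p q, q ≤ p → p + q = j →
    NC addS j (p, q, 0, 0) = Bw j (p - q) := by
  intro j
  induction j with
  | zero =>
    intro p q hq hpq
    obtain ⟨rfl, rfl⟩ : p = 0 ∧ q = 0 := by omega
    rw [NC_zero, if_pos rfl]; rfl
  | succ j ih =>
    intro p q hq hpq
    have hwt : ∀ s t : St, addS s t → wt t ≤ wt s + 1 := fun s t h => addS_wt h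
    match p, q, hq, hpq with
    | 0, q, hq, hpq => omega
    | p + 1, 0, _, hpq =>
      rw [NC_succ addS hwt j _ {(p, 0, 0, 0)} (by
        rintro ⟨x, y, z, w⟩
        simp [addS, valid, wt, Prod.ext_iff]
        omega)]
      rw [Finset.sum_singleton, ih p 0 (by omega) (by omega)]
      rw [show p + 1 - 0 = p + 1 by omega, show p - 0 = p by omega,
        show Bw (j + 1) (p + 1) = Bw j p + Bw j (p + 2) from rfl,
        Bw_eq_zero j (p + 2) (by omega)]
      omega
    | p + 1, q + 1, hq, hpq =>
      rcases eq_or_lt_of_le hq with heq | hlt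
      · have hpe : p = q := by omega
        subst hpe
        rw [NC_succ addS hwt j _ {(p + 1, p, 0, 0)} (by
          rintro ⟨x, y, z, w⟩
          simp [addS, valid, wt, Prod.ext_iff]
          omega)]
        rw [Finset.sum_singleton, ih (p + 1) p (by omega) (by omega)]
        rw [show p + 1 - (p + 1) = 0 by omega, show p + 1 - p = 1 by omega]
        rfl
      · obtain ⟨u, rfl⟩ : ∃ u, p = q + u + 1 := ⟨p - q - 1, by omega⟩
        rw [NC_succ addS hwt j _ {(q + u + 1, q + 1, 0, 0), (q + u + 2, q, 0, 0)} (by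
          rintro ⟨x, y, z, w⟩
          simp [addS, valid, wt, Prod.ext_iff]
          omega)]
        rw [Finset.sum_insert (by simp [Prod.ext_iff] <;> omega), Finset.sum_singleton]
        rw [ih (q + u + 1) (q + 1) (by omega) (by omega),
          ih (q + u + 2) q (by omega) (by omega)]
        rw [show q + u + 1 - (q + 1) = u by omega, show q + u + 2 - q = u + 2 by omega,
          show q + u + 1 + 1 - (q + 1) = u + 1 by omega]
        rfl

theorem rowLen_bot' (i : ℕ) : (⊥ : YoungDiagram).rowLen i = 0 :=
  rowLen_eq_zero_iff.2 (notMem_bot _)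

theorem q4_bot : q4 ⊥ = (0, 0, 0, 0) := by simp [q4, rowLen_bot']

theorem getD_four (a b c d : ℕ) (i : ℕ) (hi : 4 ≤ i) : [a, b, c, d].getD i 0 = 0 := by
  rcases i with _ | _ | _ | _ | i <;> first | omega | rfl

theorem Dg_bot : Dg (0, 0, 0, 0) (by simp [valid]) = ⊥ := by
  apply yd_ext_rowLen
  intro i
  exact (rowLen_Dg _ _ i).trans (by rw [rowLen_bot']; rcases i with _ | _ | _ | _ | i <;> rfl)

theorem Dg_q4 {μ : YoungDiagram} (h4 : ∀ i, 4 ≤ i → μ.rowLen i = 0) (hv : valid (q4 μ)) :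
    Dg (q4 μ) hv = μ := by
  apply yd_ext_rowLen
  intro i
  rw [rowLen_Dg]
  rcases i with _ | _ | _ | _ | i
  · rfl
  · rfl
  · rfl
  · rfl
  · rw [getD_four _ _ _ _ _ (by omega), h4 _ (by omega)]

theorem card_eq_wt {μ : YoungDiagram} (h4 : ∀ i, 4 ≤ i → μ.rowLen i = 0) :
    μ.card = wt (q4 μ) := by
  rw [card_eq_sum_rowLens4 (h4 4 le_rfl)]; rfl

theorem addBox_iff {μ ν : YoungDiagram} (hvμ : valid (q4 μ)) (hvν : valid (q4 ν))
    (h4μ : ∀ i, 4 ≤ i → μ.rowLen i = 0) (h4ν : ∀ i, 4 ≤ i → ν.rowLen i = 0) :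
    AddBox μ ν ↔ addS (q4 μ) (q4 ν) := by
  constructor
  · rintro ⟨hle, hcard⟩
    have h := yd_le_iff_rowLen.1 hle
    refine ⟨hvμ, hvν, h 0, h 1, h 2, h 3, ?_⟩
    rw [← card_eq_wt h4μ, ← card_eq_wt h4ν, hcard]
  · rintro ⟨_, _, h0, h1, h2, h3, hwt⟩
    constructor
    · rw [yd_le_iff_rowLen]
      intro i
      rcases i with _ | _ | _ | _ | i
      · exact h0
      · exact h1
      · exact h2
      · exact h3
      · rw [h4μ _ (by omega)]; omega
    · rw [card_eq_wt h4μ, card_eq_wt h4ν, hwt]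

theorem gamma_h4 {μ : YoungDiagram} (h : μ ∈ GammaInf) : ∀ i, 4 ≤ i → μ.rowLen i = 0 :=
  fun _ hi => rowLen_eq_zero_of_gamma h hi

theorem adjBox_iff {μ ν : YoungDiagram} (hμ : μ ∈ GammaInf) (hν : ν ∈ GammaInf) :
    AdjBox μ ν ↔ adjS (q4 μ) (q4 ν) := by
  rw [AdjBox, adjS,
    addBox_iff (valid_q4_of_gamma hμ) (valid_q4_of_gamma hν) (gamma_h4 hμ) (gamma_h4 hν),
    addBox_iff (valid_q4_of_gamma hν) (valid_q4_of_gamma hμ) (gamma_h4 hν) (gamma_h4 hμ)]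

theorem psp_valid {R : St → St → Prop} (hRv : ∀ s t, R s t → valid s ∧ valid t)
    {j : ℕ} {s : St} (g : PSp R j s) (k : Fin (j + 1)) : valid (g.1 k) := by
  obtain ⟨n, hn⟩ := k
  match n, hn with
  | 0, hn =>
    have h0 : (⟨0, hn⟩ : Fin (j + 1)) = 0 := rfl
    rw [h0, g.2.1]
    simp [valid]
  | n + 1, hn =>
    have hstep := g.2.2.1 ⟨n, by omega⟩
    have h2 : (⟨n, by omega⟩ : Fin j).succ = ⟨n + 1, hn⟩ := rfl
    rw [h2] at hstep
    exact (hRv _ _ hstep).2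

theorem adjS_valid : ∀ s t : St, adjS s t → valid s ∧ valid t := by
  rintro s t (⟨h1, h2, _⟩ | ⟨h1, h2, _⟩) <;> exact ⟨‹_›, ‹_›⟩

theorem Dg_congr {s t : St} (h : s = t) (hs : valid s) (ht : valid t) : Dg s hs = Dg t ht := by
  subst h; rfl

theorem q4_last_of_rowsEq1 {μ : YoungDiagram} {n : ℕ} (h : RowsEq μ [n]) :
    q4 μ = (n, 0, 0, 0) := by
  have h0 := h 0
  have h1 := h 1
  have h2 := h 2
  have h3 := h 3
  simp only [List.getD] at h0 h1 h2 h3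
  simp [q4, h0, h1, h2, h3]

theorem rowsEq1_of_Dg {n : ℕ} (hv : valid (n, 0, 0, 0)) : RowsEq (Dg (n, 0, 0, 0) hv) [n] := by
  intro i
  rw [rowLen_Dg]
  rcases i with _ | _ | _ | _ | i <;> rfl

def E1 (m n : ℕ) :
    {f : Fin (m + 1) → YoungDiagram //
      IsOscPath GammaInf m f ∧ RowsEq (f (Fin.last m)) [n]} ≃ PSp adjS m (n, 0, 0, 0) where
  toFun f := ⟨fun k => q4 (f.1 k), by
      dsimp only
      rw [f.2.1.1, q4_bot], fun k =>
      (adjBox_iff (f.2.1.2.2 k.castSucc) (f.2.1.2.2 k.succ)).1 (f.2.1.2.1 k),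
      q4_last_of_rowsEq1 f.2.2⟩
  invFun g := ⟨fun k => Dg (g.1 k) (psp_valid adjS_valid g k), ⟨⟨by
      dsimp only
      rw [Dg_congr g.2.1 (psp_valid adjS_valid g 0) (by simp [valid]), Dg_bot], fun k => by
      have hs := g.2.2.1 k
      rw [← q4_Dg (g.1 k.castSucc) (psp_valid adjS_valid g k.castSucc),
        ← q4_Dg (g.1 k.succ) (psp_valid adjS_valid g k.succ)] at hs
      exact (adjBox_iff (Dg_mem_gamma _ _) (Dg_mem_gamma _ _)).2 hs,
      fun k => Dg_mem_gamma _ _⟩, by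
      dsimp only
      rw [Dg_congr g.2.2.2 (psp_valid adjS_valid g (Fin.last m)) (by simp [valid])]
      exact rowsEq1_of_Dg _⟩⟩
  left_inv f := by
    apply Subtype.ext
    funext k
    dsimp only
    exact Dg_q4 (gamma_h4 (f.2.1.2.2 k)) _
  right_inv g := by
    apply Subtype.ext
    funext k
    dsimp only
    exact q4_Dg _ _

theorem oscCount_eq_NC (m n : ℕ) : oscCount GammaInf m [n] = NC adjS m (n, 0, 0, 0) :=
  Nat.card_congr (E1 m n)

theorem addS_valid : ∀ s t : St, addS s t → valid s ∧ valid t := fun _ _ h => ⟨h.1, h.2.1⟩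

theorem Dg_h4 (s : St) (h : valid s) : ∀ i, 4 ≤ i → (Dg s h).rowLen i = 0 := by
  intro i hi
  rw [rowLen_Dg]
  exact getD_four _ _ _ _ _ hi

theorem tab_le_last {m : ℕ} {f : Fin (m + 1) → YoungDiagram}
    (hsteps : ∀ k : Fin m, AddBox (f k.castSucc) (f k.succ)) (k : Fin (m + 1)) :
    f k ≤ f (Fin.last m) := by
  suffices h : ∀ d (k : Fin (m + 1)), (k : ℕ) + d = m → f k ≤ f (Fin.last m) by
    exact h (m - (k : ℕ)) k (by omega)
  intro d
  induction d with
  | zero =>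
    intro k hk
    have : k = Fin.last m := Fin.ext (by simpa using hk)
    rw [this]
  | succ d ih =>
    intro k hk
    have hkm : (k : ℕ) < m := by omega
    have hstep := hsteps ⟨(k : ℕ), hkm⟩
    have h1 : (⟨(k : ℕ), hkm⟩ : Fin m).castSucc = k := Fin.ext rfl
    rw [h1] at hstep
    have h2 := ih ⟨(k : ℕ) + 1, by omega⟩ (by simp; omega)
    exact le_trans hstep.1 h2

theorem tab_rows2 {m l₁ l₂ : ℕ} {f : Fin (m + 1) → YoungDiagram}
    (hsteps : ∀ k : Fin m, AddBox (f k.castSucc) (f k.succ))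
    (hlast : RowsEq (f (Fin.last m)) [l₁, l₂]) (k : Fin (m + 1)) :
    ∀ i, 2 ≤ i → (f k).rowLen i = 0 := by
  intro i hi
  have hle := yd_le_iff_rowLen.1 (tab_le_last hsteps k) i
  have h0 := hlast i
  have : [l₁, l₂].getD i 0 = 0 := by
    rcases i with _ | _ | i
    · omega
    · omega
    · rfl
  omega

theorem tab_valid {m l₁ l₂ : ℕ} {f : Fin (m + 1) → YoungDiagram}
    (hsteps : ∀ k : Fin m, AddBox (f k.castSucc) (f k.succ))
    (hlast : RowsEq (f (Fin.last m)) [l₁, l₂]) (k : Fin (m + 1)) : valid (q4 (f k)) := by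
  have h2 := tab_rows2 hsteps hlast k 2 le_rfl
  have h3 := tab_rows2 hsteps hlast k 3 (by omega)
  refine ⟨(f k).rowLen_anti 0 1 (by omega), (f k).rowLen_anti 1 2 (by omega),
    (f k).rowLen_anti 2 3 (by omega), ?_, ?_⟩ <;> simp [q4, h2, h3]

theorem q4_last_of_rowsEq2 {μ : YoungDiagram} {l₁ l₂ : ℕ} (h : RowsEq μ [l₁, l₂]) :
    q4 μ = (l₁, l₂, 0, 0) := by
  have h0 := h 0
  have h1 := h 1
  have h2 := h 2
  have h3 := h 3
  simp only [List.getD] at h0 h1 h2 h3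
  simp [q4, h0, h1, h2, h3]

theorem rowsEq2_of_Dg {l₁ l₂ : ℕ} (hv : valid (l₁, l₂, 0, 0)) :
    RowsEq (Dg (l₁, l₂, 0, 0) hv) [l₁, l₂] := by
  intro i
  rw [rowLen_Dg]
  rcases i with _ | _ | _ | _ | i <;> rfl

def E2 (m l₁ l₂ : ℕ) :
    {f : Fin (m + 1) → YoungDiagram //
      IsTabPath (fun _ => Set.univ) m f ∧ RowsEq (f (Fin.last m)) [l₁, l₂]} ≃
      PSp addS m (l₁, l₂, 0, 0) where
  toFun f := ⟨fun k => q4 (f.1 k), by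
      dsimp only
      rw [f.2.1.1, q4_bot], fun k =>
      (addBox_iff (tab_valid f.2.1.2.1 f.2.2 k.castSucc) (tab_valid f.2.1.2.1 f.2.2 k.succ)
        (fun i hi => tab_rows2 f.2.1.2.1 f.2.2 k.castSucc i (by omega))
        (fun i hi => tab_rows2 f.2.1.2.1 f.2.2 k.succ i (by omega))).1 (f.2.1.2.1 k),
      q4_last_of_rowsEq2 f.2.2⟩
  invFun g := ⟨fun k => Dg (g.1 k) (psp_valid addS_valid g k), ⟨⟨by
      dsimp only
      rw [Dg_congr g.2.1 (psp_valid addS_valid g 0) (by simp [valid]), Dg_bot], fun k => by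
      have hs := g.2.2.1 k
      rw [← q4_Dg (g.1 k.castSucc) (psp_valid addS_valid g k.castSucc),
        ← q4_Dg (g.1 k.succ) (psp_valid addS_valid g k.succ)] at hs
      refine (addBox_iff ?_ ?_ (Dg_h4 _ _) (Dg_h4 _ _)).2 hs
      · rw [q4_Dg]; exact psp_valid addS_valid g k.castSucc
      · rw [q4_Dg]; exact psp_valid addS_valid g k.succ,
      fun k => Set.mem_univ _⟩, by
      dsimp only
      rw [Dg_congr g.2.2.2 (psp_valid addS_valid g (Fin.last m)) (by
        have := psp_valid addS_valid g (Fin.last m)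
        rwa [g.2.2.2] at this)]
      exact rowsEq2_of_Dg _⟩⟩
  left_inv f := by
    apply Subtype.ext
    funext k
    dsimp only
    exact Dg_q4 (fun i hi => tab_rows2 f.2.1.2.1 f.2.2 k i (by omega)) _
  right_inv g := by
    apply Subtype.ext
    funext k
    dsimp only
    exact q4_Dg _ _

theorem tabCount_eq_NC (m l₁ l₂ : ℕ) :
    tabCount (fun _ => Set.univ) m [l₁, l₂] = NC addS m (l₁, l₂, 0, 0) :=
  Nat.card_congr (E2 m l₁ l₂)


/-- Theorem 2.1, equation (3) (`symdim`), for `ℓ = ∞`: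
for a two-row diagram `λ = [λ₁,λ₂]` of size `m` and `ν₁ = 2λ₁ - m`,
the number of oscillating tableaux of length `m` and shape `[ν₁]` with shapes
in `Γ(∞)` equals `C(|𝒯(λ)| + 1, 2)`. -/
theorem osc_count_eq_choose_succ_inf (m : ℕ) (hm : 1 ≤ m)
    (l₁ l₂ : ℕ) (hl : l₂ ≤ l₁) (hlm : l₁ + l₂ = m) :
    oscCount GammaInf m [2 * l₁ - m]
      = Nat.choose (tabCount (fun _ => Set.univ) m [l₁, l₂] + 1) 2 := by
  have hn : 2 * l₁ - m = l₁ - l₂ := by omega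
  rw [hn, oscCount_eq_NC, tabCount_eq_NC, tab_closed m l₁ l₂ hl hlm,
    (osc_closed m).1 (l₁ - l₂)]
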